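/- If (x,y) ∈ D̂₁ \ Ê₁ (that is, k ≤ x ≤ û₁ and ŵ₁ ≤ y ≤ v̂), then f(x,y) ∉ Ê₁; in other words, once a trajectory has left region Ê₁ while staying in D̂₁ it cannot return to Ê₁ in one step. -/
import Mathlib


/-- No return to region `Ê₁`: if `(x,y) ∈ D̂₁ \ Ê₁` then `f(x,y) ∉ Ê₁`. -/
theorem chialvo_no_return_E1
    (a b c k : ℝ)
    (ha : a ∈ Set.Ioo (0:ℝ) 1) (hb : b ∈ Set.Ioo (0:ℝ) 1)
    (hc : c ∈ Set.Ioo (0:ℝ) 1) (hk : 0 < k)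
    (f : ℝ × ℝ → ℝ × ℝ)
    (hf : ∀ p : ℝ × ℝ,
      f p = (p.1 ^ 2 * Real.exp (p.2 - p.1) + k, a * p.2 - b * p.1 + c))
    (v u1 w1 : ℝ)
    (hv : v = (c - b * k) / (1 - a))
    (hu1 : u1 = 4 / Real.exp 2 * Real.exp v + k)
    (hw1 : w1 = (c - b * u1) / (1 - a))
    (D1 E1 : Set (ℝ × ℝ))
    (hD1 : D1 = {p : ℝ × ℝ | k ≤ p.1 ∧ p.1 ≤ u1 ∧ p.2 ≤ v})
    (hE1 : E1 = {p : ℝ × ℝ | k ≤ p.1 ∧ p.1 ≤ u1 ∧ p.2 < w1}) :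
    ∀ p ∈ D1 \ E1, f p ∉ E1 := by
  rintro ⟨x, y⟩ ⟨hpD, hpE⟩ hfE
  rw [hD1] at hpD
  rw [hE1] at hpE hfE
  obtain ⟨hkx, hxu, hyv⟩ := hpD
  have hwy : w1 ≤ y := by
    by_contra h
    exact hpE ⟨hkx, hxu, not_le.mp h⟩
  rw [hf] at hfE
  have hlt : a * y - b * x + c < w1 := hfE.2.2
  have h1a : (0:ℝ) < 1 - a := by linarith [ha.2]
  have hw : (1 - a) * w1 = c - b * u1 := by
    rw [hw1]; field_simp
  nlinarith [mul_le_mul_of_nonneg_left hwy (le_of_lt ha.1),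
    mul_le_mul_of_nonneg_left hxu (le_of_lt hb.1)]
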